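/- Let n ≥ 1, p > (n−1)/2 and σ ∈ E₊, and let I_p(σ) be the endomorphism of E given by I_p(σ) = (1/(2(2p+3)))((2p+1)P(σ⁻¹) − σ⁻¹⊗σ⁻¹). Then the determinant of I_p(σ) as an endomorphism of the n(n+1)/2-dimensional space E equals ((2p+1)/(2(2p+3)))^{n(n+1)/2} · (1 − n/(2p+1)) · (det σ)^{−(n+1)}. -/

import Mathlib

open MeasureTheory Matrix Real

noncomputable section

/-- Square real matrices of size `n`. -/
abbrev Mat (n : ℕ) : Type := Matrix (Fin n) (Fin n) ℝ

/-- The submodule of symmetric `n × n` real matrices. -/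
def symSubmodule (n : ℕ) : Submodule ℝ (Mat n) where
  carrier := {A | A.IsSymm}
  add_mem' := fun {a b} (ha : aᵀ = a) (hb : bᵀ = b) => by
    show (a + b)ᵀ = a + b
    rw [Matrix.transpose_add, ha, hb]
  zero_mem' := Matrix.isSymm_zero
  smul_mem' := fun c a (ha : aᵀ = a) => by
    show (c • a)ᵀ = c • a
    rw [Matrix.transpose_smul, ha]

/-- The space `E` of symmetric `n × n` real matrices. -/
abbrev SymMat (n : ℕ) : Type := ↥(symSubmodule n)

lemma symMat_isSymm {n : ℕ} (u : SymMat n) : (u : Mat n).IsSymm := u.2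

/-- The endomorphism `P(a) : v ↦ a v a` of the space `E` of symmetric matrices. -/
def Pmap {n : ℕ} (a : SymMat n) : Module.End ℝ (SymMat n) where
  toFun v := ⟨(a : Mat n) * (v : Mat n) * (a : Mat n), by
    show ((a : Mat n) * (v : Mat n) * (a : Mat n))ᵀ = (a : Mat n) * (v : Mat n) * (a : Mat n)
    have ha : (a : Mat n)ᵀ = (a : Mat n) := a.2
    have hv : (v : Mat n)ᵀ = (v : Mat n) := v.2
    rw [Matrix.transpose_mul, Matrix.transpose_mul, ha, hv, ← Matrix.mul_assoc]⟩
  map_add' u v := by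
    apply Subtype.ext
    simp [Matrix.mul_add, Matrix.add_mul]
  map_smul' c v := by
    apply Subtype.ext
    simp [Matrix.mul_smul, Matrix.smul_mul]

/-- The endomorphism `a ⊗ a : v ↦ tr (a v) • a` of the space `E` of symmetric matrices. -/
def tensMap {n : ℕ} (a : SymMat n) : Module.End ℝ (SymMat n) where
  toFun v := ((a : Mat n) * (v : Mat n)).trace • a
  map_add' u v := by
    simp [Matrix.mul_add, add_smul]
  map_smul' c v := by
    simp [Matrix.mul_smul, smul_smul]

/-- The inverse of a symmetric matrix, as a symmetric matrix. -/
def symInv {n : ℕ} (a : SymMat n) : SymMat n :=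
  ⟨(a : Mat n)⁻¹, by
    show ((a : Mat n)⁻¹)ᵀ = (a : Mat n)⁻¹
    have ha : (a : Mat n)ᵀ = (a : Mat n) := a.2
    rw [Matrix.transpose_nonsing_inv, ha]⟩

namespace StmtAux

variable {n : ℕ}

/-- Conjugation endomorphism `v ↦ g v gᵀ` of the symmetric matrices. -/
def conjMap (g : Mat n) : Module.End ℝ (SymMat n) where
  toFun v := ⟨g * (v : Mat n) * gᵀ, by
    show (g * (v : Mat n) * gᵀ)ᵀ = g * (v : Mat n) * gᵀ
    have hv : (v : Mat n)ᵀ = (v : Mat n) := v.2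
    rw [Matrix.transpose_mul, Matrix.transpose_mul, Matrix.transpose_transpose, hv,
      Matrix.mul_assoc]⟩
  map_add' u v := by
    apply Subtype.ext
    simp [Matrix.mul_add, Matrix.add_mul]
  map_smul' c v := by
    apply Subtype.ext
    simp [Matrix.mul_smul, Matrix.smul_mul]

@[simp] lemma conjMap_coe (g : Mat n) (v : SymMat n) :
    (conjMap g v : Mat n) = g * (v : Mat n) * gᵀ := rfl

lemma conjMap_comp (g h : Mat n) :
    (conjMap g) ∘ₗ (conjMap h) = conjMap (g * h) := by
  apply LinearMap.ext; intro v
  apply Subtype.ext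
  simp [Matrix.transpose_mul, Matrix.mul_assoc]

lemma conjMap_one : conjMap (1 : Mat n) = LinearMap.id := by
  apply LinearMap.ext; intro v
  apply Subtype.ext
  simp

/-- A diagonal matrix as an element of `SymMat`. -/
def diagSym (d : Fin n → ℝ) : SymMat n :=
  ⟨Matrix.diagonal d, by
    show (Matrix.diagonal d)ᵀ = Matrix.diagonal d
    exact Matrix.diagonal_transpose d⟩

@[simp] lemma diagSym_coe (d : Fin n → ℝ) : (diagSym d : Mat n) = Matrix.diagonal d := rfl

/-- Index type for the basis of symmetric matrices. -/
abbrev SIdx (n : ℕ) := {p : Fin n × Fin n // p.1 ≤ p.2}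

/-- The coordinate linear equivalence for symmetric matrices. -/
def symEquiv : SymMat n ≃ₗ[ℝ] (SIdx n → ℝ) where
  toFun v q := (v : Mat n) q.1.1 q.1.2
  map_add' u v := rfl
  map_smul' c v := rfl
  invFun f := ⟨Matrix.of fun k l => f ⟨(k ⊓ l, k ⊔ l), inf_le_sup⟩, by
    show (Matrix.of fun k l => f ⟨(k ⊓ l, k ⊔ l), inf_le_sup⟩)ᵀ
        = Matrix.of fun k l => f ⟨(k ⊓ l, k ⊔ l), inf_le_sup⟩
    ext k l
    simp [Matrix.transpose_apply, inf_comm, sup_comm]⟩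
  left_inv v := by
    apply Subtype.ext
    ext k l
    show (v : Mat n) (k ⊓ l) (k ⊔ l) = (v : Mat n) k l
    rcases le_total k l with h | h
    · rw [inf_eq_left.mpr h, sup_eq_right.mpr h]
    · rw [inf_eq_right.mpr h, sup_eq_left.mpr h]
      have hv : (v : Mat n)ᵀ = (v : Mat n) := v.2
      conv_rhs => rw [← hv]
      rfl
  right_inv f := by
    funext q
    show f ⟨(q.1.1 ⊓ q.1.2, q.1.1 ⊔ q.1.2), inf_le_sup⟩ = f q
    congr 1
    exact Subtype.ext (Prod.ext (inf_eq_left.mpr q.2) (sup_eq_right.mpr q.2))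

/-- Basis of symmetric matrices. -/
def symBasis : Module.Basis (SIdx n) ℝ (SymMat n) := Module.Basis.ofEquivFun symEquiv

end StmtAux
namespace StmtAux2
open StmtAux Finset

variable {n : ℕ}

/-- The finset of ordered pairs. -/
def S (n : ℕ) : Finset (Fin n × Fin n) := Finset.univ.filter (fun p => p.1 ≤ p.2)

def S' (n : ℕ) : Finset (Fin n × Fin n) := Finset.univ.filter (fun p => p.2 ≤ p.1)

lemma mem_S (p : Fin n × Fin n) : p ∈ S n ↔ p.1 ≤ p.2 := by simp [S]

lemma S_union : S n ∪ S' n = Finset.univ := by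
  ext p; simp [S, S', le_total]

lemma S_inter : S n ∩ S' n = Finset.univ.filter (fun p => p.1 = p.2) := by
  ext p
  simp only [S, S', Finset.mem_inter, Finset.mem_filter, Finset.mem_univ, true_and]
  constructor
  · rintro ⟨h1, h2⟩; exact le_antisymm h1 h2
  · rintro h; exact ⟨le_of_eq h, ge_of_eq h⟩

lemma card_S' : (S' n).card = (S n).card := by
  refine Finset.card_nbij' Prod.swap Prod.swap ?_ ?_ ?_ ?_
  · intro p hp; simp [S, S'] at *; exact hp
  · intro p hp; simp [S, S'] at *; exact hp
  · intro p _; simp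
  · intro p _; simp

lemma card_diag : (Finset.univ.filter (fun p : Fin n × Fin n => p.1 = p.2)).card = n := by
  have h : (Finset.univ.filter (fun p : Fin n × Fin n => p.1 = p.2)).card
      = (Finset.univ : Finset (Fin n)).card := by
    refine Finset.card_nbij' (fun p => p.1) (fun k => (k, k)) ?_ ?_ ?_ ?_
    · intro p _; simp
    · intro k _; simp
    · intro p hp; simp at hp; ext <;> simp [hp]
    · intro k _; simp
  rw [h, Finset.card_univ, Fintype.card_fin]

lemma card_S : (S n).card = n * (n + 1) / 2 := by
  have h := Finset.card_union_add_card_inter (S n) (S' n)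
  rw [S_union, S_inter, card_S', card_diag, Finset.card_univ] at h
  rw [Fintype.card_prod, Fintype.card_fin] at h
  have h2 : n * (n + 1) = n * n + n := by ring
  omega

lemma prod_diag (f : Fin n × Fin n → ℝ) :
    ∏ p ∈ Finset.univ.filter (fun p : Fin n × Fin n => p.1 = p.2), f p = ∏ k, f (k, k) := by
  refine Finset.prod_nbij' (fun p => p.1) (fun k => (k, k)) ?_ ?_ ?_ ?_ ?_
  · intro p _; simp
  · intro k _; simp
  · intro p hp; simp at hp; ext <;> simp [hp]
  · intro k _; simp
  · intro p hp; simp at hp; rw [show p = (p.1, p.1) by ext <;> simp [hp]]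

lemma sum_diag (f : Fin n × Fin n → ℝ) :
    ∑ p ∈ Finset.univ.filter (fun p : Fin n × Fin n => p.1 = p.2), f p = ∑ k, f (k, k) := by
  refine Finset.sum_nbij' (fun p => p.1) (fun k => (k, k)) ?_ ?_ ?_ ?_ ?_
  · intro p _; simp
  · intro k _; simp
  · intro p hp; simp at hp; ext <;> simp [hp]
  · intro k _; simp
  · intro p hp; simp at hp; rw [show p = (p.1, p.1) by ext <;> simp [hp]]

lemma prod_S_pairs (d : Fin n → ℝ) (hd : ∀ k, 0 < d k) :
    ∏ p ∈ S n, (d p.1 * d p.2) = (∏ k, d k) ^ (n + 1) := by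
  set P := ∏ p ∈ S n, (d p.1 * d p.2) with hP
  set Q := (∏ k, d k) ^ (n + 1) with hQ
  have hP' : ∏ p ∈ S' n, (d p.1 * d p.2) = P := by
    refine Finset.prod_nbij' Prod.swap Prod.swap ?_ ?_ ?_ ?_ ?_
    · intro p hp; simp [S, S'] at *; exact hp
    · intro p hp; simp [S, S'] at *; exact hp
    · intro p _; simp
    · intro p _; simp
    · intro p _; simp [mul_comm]
  have huniv : ∏ p : Fin n × Fin n, (d p.1 * d p.2) = (∏ k, d k) ^ (2 * n) := by
    rw [Fintype.prod_prod_type]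
    simp only [Finset.prod_mul_distrib, Finset.prod_const, Finset.card_univ, Fintype.card_fin]
    rw [Finset.prod_pow]
    ring
  have hinter : ∏ p ∈ S n ∩ S' n, (d p.1 * d p.2) = (∏ k, d k) ^ 2 := by
    rw [S_inter, prod_diag (fun p => d p.1 * d p.2)]
    simp only
    rw [Finset.prod_mul_distrib, sq]
  have key := Finset.prod_union_inter (s₁ := S n) (s₂ := S' n)
      (f := fun p : Fin n × Fin n => d p.1 * d p.2)
  rw [S_union, hP', hinter] at key
  rw [← hP] at key
  rw [huniv] at key
  have hPpos : 0 < P := Finset.prod_pos (fun p _ => mul_pos (hd _) (hd _))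
  have hQpos : 0 < Q := pow_pos (Finset.prod_pos (fun k _ => hd k)) _
  have hsq : Q ^ 2 = P ^ 2 := by
    rw [hQ, ← pow_mul, show (n+1)*2 = 2*n + 2 by ring, pow_add, key]
    ring
  nlinarith [hPpos, hQpos, hsq, sq_nonneg (P - Q)]

lemma sum_S_diag_indicator (g : Fin n → ℝ) :
    ∑ p ∈ S n, (if p.1 = p.2 then g p.1 else 0) = ∑ k, g k := by
  have h3 : ∑ p ∈ S n, (if p.1 = p.2 then g p.1 else 0)
      = ∑ p ∈ Finset.univ.filter (fun p : Fin n × Fin n => p.1 = p.2),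
          (if p.1 = p.2 then g p.1 else 0) := by
    rw [← Finset.sum_filter_add_sum_filter_not (S n) (fun p => p.1 = p.2)]
    have h2 : ∑ p ∈ (S n).filter (fun p => ¬ p.1 = p.2), (if p.1 = p.2 then g p.1 else 0)
        = 0 := by
      apply Finset.sum_eq_zero
      intro p hp
      simp only [Finset.mem_filter] at hp
      simp [hp.2]
    rw [h2, add_zero]
    congr 1
    ext p
    simp only [Finset.mem_filter, mem_S, Finset.mem_univ, true_and]
    exact ⟨fun h => h.2, fun h => ⟨le_of_eq h, h⟩⟩
  rw [h3, sum_diag (fun p => if p.1 = p.2 then g p.1 else 0)]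
  simp

end StmtAux2
namespace StmtAux3
open StmtAux StmtAux2 Finset

variable {n : ℕ}

lemma symEquiv_symm_coe (f : SIdx n → ℝ) (k l : Fin n) :
    ((symEquiv.symm f : SymMat n) : Mat n) k l = f ⟨(k ⊓ l, k ⊔ l), inf_le_sup⟩ := rfl

lemma symEquiv_apply (v : SymMat n) (q : SIdx n) :
    symEquiv v q = (v : Mat n) q.1.1 q.1.2 := rfl

lemma sum_dk (d : Fin n → ℝ) (r : SIdx n) :
    ∑ k, d k * (if ((k, k) : Fin n × Fin n) = (r : Fin n × Fin n) then 1 else 0)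
      = if r.1.1 = r.1.2 then d r.1.1 else 0 := by
  by_cases hr : r.1.1 = r.1.2
  · rw [if_pos hr]
    have hiff : ∀ k : Fin n, (((k, k) : Fin n × Fin n) = (r : Fin n × Fin n)) ↔ k = r.1.1 := by
      intro k
      rw [Prod.ext_iff]
      constructor
      · exact fun h => h.1
      · rintro rfl; exact ⟨rfl, hr⟩
    simp only [hiff]
    simp [Finset.sum_ite_eq']
  · rw [if_neg hr]
    apply Finset.sum_eq_zero
    intro k _
    have : ¬ (((k, k) : Fin n × Fin n) = (r : Fin n × Fin n)) := by
      intro h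
      rw [Prod.ext_iff] at h
      exact hr (h.1.symm.trans h.2)
    simp [this]

lemma toMatrix_diag_op (c t : ℝ) (d : Fin n → ℝ) :
    LinearMap.toMatrix symBasis symBasis
        (c • (t • Pmap (diagSym d) - tensMap (diagSym d)) : Module.End ℝ (SymMat n))
      = Matrix.of fun q r : SIdx n =>
          c * t * d q.1.1 * d q.1.2 * (if q = r then 1 else 0)
            - c * ((if r.1.1 = r.1.2 then d r.1.1 else 0)
              * (if q.1.1 = q.1.2 then d q.1.1 else 0)) := by
  ext q r
  rw [LinearMap.toMatrix_apply, Matrix.of_apply]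
  rw [show (symBasis r : SymMat n) = symEquiv.symm (Pi.single r 1) by
    rw [symBasis, Module.Basis.coe_ofEquivFun]]
  set v : SymMat n := symEquiv.symm (Pi.single r 1) with hv
  have happ : ((c • (t • Pmap (diagSym d) - tensMap (diagSym d)) : Module.End ℝ (SymMat n)) v)
      = c • (t • (Pmap (diagSym d) v) - tensMap (diagSym d) v) := rfl
  rw [happ]
  rw [symBasis, Module.Basis.ofEquivFun_repr_apply]
  rw [symEquiv_apply]
  have hcoe : ((c • (t • (Pmap (diagSym d) v) - tensMap (diagSym d) v) : SymMat n) : Mat n)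
      = c • (t • ((Matrix.diagonal d) * (v : Mat n) * Matrix.diagonal d)
          - (Matrix.diagonal d * (v : Mat n)).trace • Matrix.diagonal d) := by
    rfl
  rw [hcoe]
  have hvent : ∀ k l : Fin n, (v : Mat n) k l
      = (if ((k ⊓ l, k ⊔ l) : Fin n × Fin n) = (r : Fin n × Fin n) then 1 else 0) := by
    intro k l
    rw [hv, symEquiv_symm_coe, Pi.single_apply]
    congr 1
    simp [Subtype.ext_iff, eq_comm]
  simp only [Matrix.smul_apply, Matrix.sub_apply, Matrix.diagonal_mul, Matrix.mul_diagonal,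
    smul_eq_mul]
  have htr : (Matrix.diagonal d * (v : Mat n)).trace = if r.1.1 = r.1.2 then d r.1.1 else 0 := by
    rw [Matrix.trace]
    simp only [Matrix.diag_apply, Matrix.diagonal_mul]
    rw [← sum_dk d r]
    apply Finset.sum_congr rfl
    intro k _
    rw [hvent k k]
    simp
  rw [htr, hvent q.1.1 q.1.2]
  have hq1 : q.1.1 ⊓ q.1.2 = q.1.1 := inf_eq_left.mpr q.2
  have hq2 : q.1.1 ⊔ q.1.2 = q.1.2 := sup_eq_right.mpr q.2
  rw [hq1, hq2, Matrix.diagonal_apply]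
  have hcond : (((q.1.1, q.1.2) : Fin n × Fin n) = (r : Fin n × Fin n)) ↔ q = r := by
    rw [Subtype.ext_iff]
  by_cases h : q = r
  · rw [if_pos (hcond.mpr h), if_pos h]; ring
  · rw [if_neg (fun hh => h (hcond.mp hh)), if_neg h]; ring

end StmtAux3
namespace StmtAux4
open StmtAux StmtAux2 StmtAux3 Finset

variable {n : ℕ}

lemma det_diag_op (c t : ℝ) (hc : c ≠ 0) (ht : t ≠ 0) (d : Fin n → ℝ) (hd : ∀ k, 0 < d k) :
    LinearMap.det (c • (t • Pmap (diagSym d) - tensMap (diagSym d)) : Module.End ℝ (SymMat n))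
      = c ^ (n * (n + 1) / 2) * t ^ (n * (n + 1) / 2) * (1 - n / t) * (∏ k, d k) ^ (n + 1) := by
  rw [← LinearMap.det_toMatrix symBasis, toMatrix_diag_op]
  set w : SIdx n → ℝ := fun q => c * t * d q.1.1 * d q.1.2 with hw
  set u : SIdx n → ℝ := fun q => if q.1.1 = q.1.2 then -(1 / (t * d q.1.1)) else 0 with hu
  set vv : SIdx n → ℝ := fun r => if r.1.1 = r.1.2 then d r.1.1 else 0 with hvv
  have hfact : (Matrix.of fun q r : SIdx n =>
          c * t * d q.1.1 * d q.1.2 * (if q = r then 1 else 0)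
            - c * ((if r.1.1 = r.1.2 then d r.1.1 else 0)
              * (if q.1.1 = q.1.2 then d q.1.1 else 0)))
      = Matrix.diagonal w * (1 + Matrix.replicateCol Unit u * Matrix.replicateRow Unit vv) := by
    ext q r
    rw [Matrix.diagonal_mul, Matrix.of_apply]
    have hcr : (Matrix.replicateCol Unit u * Matrix.replicateRow Unit vv) q r = u q * vv r := by
      simp [Matrix.mul_apply, Matrix.replicateCol, Matrix.replicateRow]
    rw [Matrix.add_apply, hcr, Matrix.one_apply]
    rw [hw, hu, hvv]
    simp only
    have hdq : d q.1.1 ≠ 0 := ne_of_gt (hd _)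
    have hdq2 : d q.1.2 ≠ 0 := ne_of_gt (hd _)
    have hdr1 : d r.1.1 ≠ 0 := ne_of_gt (hd _)
    have hdr2 : d r.1.2 ≠ 0 := ne_of_gt (hd _)
    by_cases hq : q.1.1 = q.1.2 <;> by_cases hr : r.1.1 = r.1.2 <;>
      by_cases hqr : q = r <;>
      simp only [if_pos, if_neg, hq, hr, hqr, if_true, if_false, ite_true, ite_false] <;>
      field_simp <;> ring
  rw [hfact, Matrix.det_mul, Matrix.det_diagonal, Matrix.det_one_add_replicateCol_mul_replicateRow]
  have hprod : ∏ q : SIdx n, w q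
      = c ^ (n * (n + 1) / 2) * t ^ (n * (n + 1) / 2) * (∏ k, d k) ^ (n + 1) := by
    have h1 : ∏ q : SIdx n, w q = ∏ p ∈ S n, (c * t * d p.1 * d p.2) := by
      rw [Finset.prod_subtype (S n) (fun p => mem_S p) (fun p => c * t * d p.1 * d p.2)]
    rw [h1]
    have h2 : ∀ p : Fin n × Fin n, c * t * d p.1 * d p.2 = (c * t) * (d p.1 * d p.2) := by
      intro p; ring
    simp_rw [h2]
    rw [Finset.prod_mul_distrib, Finset.prod_const, card_S, prod_S_pairs d hd, mul_pow]
  have hdot : vv ⬝ᵥ u = -(n / t) := by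
    rw [dotProduct]
    have h1 : ∑ q : SIdx n, vv q * u q
        = ∑ p ∈ S n, (if p.1 = p.2 then -(1/t) else 0) := by
      rw [Finset.sum_subtype (S n) (fun p => mem_S p)
        (fun p => if p.1 = p.2 then -(1/t) else 0)]
      apply Finset.sum_congr rfl
      intro q _
      rw [hvv, hu]
      simp only
      by_cases hq : q.1.1 = q.1.2
      · rw [if_pos hq, if_pos hq, if_pos hq]
        have : d q.1.1 ≠ 0 := ne_of_gt (hd _)
        field_simp
      · rw [if_neg hq, if_neg hq, if_neg hq]; ring
    rw [h1, sum_S_diag_indicator (fun _ => -(1/t))]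
    rw [Finset.sum_const, Finset.card_univ, Fintype.card_fin, nsmul_eq_mul]
    ring
  rw [hprod, hdot]
  ring

end StmtAux4
namespace StmtAux

@[simp] lemma Pmap_coe {n : ℕ} (a v : SymMat n) :
    ((Pmap a v : SymMat n) : Mat n) = (a : Mat n) * (v : Mat n) * (a : Mat n) := rfl

@[simp] lemma tensMap_coe {n : ℕ} (a v : SymMat n) :
    ((tensMap a v : SymMat n) : Mat n)
      = ((a : Mat n) * (v : Mat n)).trace • (a : Mat n) := rfl

@[simp] lemma symInv_coe {n : ℕ} (a : SymMat n) :
    ((symInv a : SymMat n) : Mat n) = (a : Mat n)⁻¹ := rfl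

end StmtAux

open StmtAux StmtAux2 StmtAux3 StmtAux4 in
/-- Corollary 3.3: the determinant of the Fisher information
`I_p(σ) = (2(2p+3))⁻¹ ((2p+1) P(σ⁻¹) - σ⁻¹ ⊗ σ⁻¹)`. -/
theorem stmt_13 (n : ℕ) (hn : 1 ≤ n) (p : ℝ) (hp : p > ((n : ℝ) - 1) / 2)
    (σ : SymMat n) (hσ : (σ : Mat n).PosDef) :
    LinearMap.det ((2 * (2 * p + 3))⁻¹ •
        ((2 * p + 1) • Pmap (symInv σ) - tensMap (symInv σ)) : Module.End ℝ (SymMat n)) =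
      ((2 * p + 1) / (2 * (2 * p + 3))) ^ (n * (n + 1) / 2) * (1 - (n : ℝ) / (2 * p + 1)) *
        (σ : Mat n).det ^ (-((n : ℝ) + 1)) := by
  have hn1 : (1 : ℝ) ≤ (n : ℝ) := by exact_mod_cast hn
  have hppos : 0 < p := by nlinarith
  set c : ℝ := (2 * (2 * p + 3))⁻¹ with hc_def
  set t : ℝ := 2 * p + 1 with ht_def
  have hc : c ≠ 0 := by rw [hc_def]; positivity
  have ht : t ≠ 0 := by rw [ht_def]; positivity
  -- the inverse matrix and its spectral decomposition
  set A : Mat n := (σ : Mat n)⁻¹ with hA_def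
  have hA : A.PosDef := hσ.inv
  have hAh : A.IsHermitian := hA.1
  set d : Fin n → ℝ := hAh.eigenvalues with hd_def
  have hd : ∀ k, 0 < d k := fun k => hA.eigenvalues_pos k
  set U : Mat n := (hAh.eigenvectorUnitary : Mat n) with hU_def
  set D : Mat n := Matrix.diagonal d with hD_def
  have hstar : star U = Uᵀ := by
    ext i j
    simp [Matrix.star_apply, Matrix.transpose_apply]
  have hspec : A = U * D * Uᵀ := by
    have h := hAh.spectral_theorem
    rw [Unitary.conjStarAlgAut_apply] at h
    rw [hstar] at h
    have hco : (RCLike.ofReal ∘ hAh.eigenvalues : Fin n → ℝ) = d := by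
      funext i; rw [hd_def]; simp [RCLike.ofReal_real_eq_id]
    rw [hco] at h
    exact h
  have hU1 : U * Uᵀ = 1 := by
    have hmem := hAh.eigenvectorUnitary.2
    rw [Matrix.mem_unitaryGroup_iff] at hmem
    rw [← hstar]; exact hmem
  have hU2 : Uᵀ * U = 1 := by
    have hmem := hAh.eigenvectorUnitary.2
    rw [Matrix.mem_unitaryGroup_iff'] at hmem
    rw [← hstar]; exact hmem
  have htr : ∀ X : Mat n, (D * (Uᵀ * X * U)).trace = (A * X).trace := by
    intro X
    have h1 : D * (Uᵀ * X * U) = (D * Uᵀ * X) * U := by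
      simp [Matrix.mul_assoc]
    rw [h1, Matrix.trace_mul_comm]
    have h2 : U * (D * Uᵀ * X) = A * X := by
      rw [hspec]; simp [Matrix.mul_assoc]
    rw [h2]
  have hmain : ∀ X : Mat n, U * (D * (Uᵀ * X * U) * D) * Uᵀ = A * X * A := by
    intro X
    rw [hspec]; simp [Matrix.mul_assoc]
  -- rewrite the operator as a conjugation of the diagonal one
  have hopeq : (c • (t • Pmap (symInv σ) - tensMap (symInv σ)) : Module.End ℝ (SymMat n))
      = (conjMap U) ∘ₗ ((c • (t • Pmap (diagSym d) - tensMap (diagSym d))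
          : Module.End ℝ (SymMat n)) ∘ₗ conjMap Uᵀ) := by
    apply LinearMap.ext
    intro v
    apply Subtype.ext
    simp only [LinearMap.comp_apply, LinearMap.smul_apply, LinearMap.sub_apply,
      SetLike.val_smul, AddSubgroupClass.coe_sub, Pmap_coe, tensMap_coe, conjMap_coe,
      symInv_coe, diagSym_coe, Matrix.transpose_transpose]
    rw [← hA_def, ← hD_def]
    simp only [Matrix.mul_smul, Matrix.smul_mul, Matrix.mul_sub, Matrix.sub_mul]
    rw [htr ((v : Mat n)), hmain ((v : Mat n)), ← hspec]
  rw [hopeq]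
  rw [LinearMap.det_comp, LinearMap.det_comp]
  have hdetconj : LinearMap.det (conjMap U : Module.End ℝ (SymMat n))
      * LinearMap.det (conjMap Uᵀ : Module.End ℝ (SymMat n)) = 1 := by
    rw [← LinearMap.det_comp, conjMap_comp, hU1, conjMap_one, LinearMap.det_id]
  rw [det_diag_op c t hc ht d hd]
  -- product of eigenvalues
  have hprodd : ∏ k, d k = A.det := by
    have h := hAh.det_eq_prod_eigenvalues
    rw [hd_def]
    simpa using h.symm
  have hdetA : A.det = ((σ : Mat n).det)⁻¹ := by
    rw [hA_def, Matrix.det_nonsing_inv, Ring.inverse_eq_inv]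
  have hrpow : (σ : Mat n).det ^ (-((n : ℝ) + 1))
      = (((σ : Mat n).det)⁻¹) ^ (n + 1) := by
    rw [show -((n : ℝ) + 1) = -(((n + 1 : ℕ) : ℝ)) by push_cast; ring]
    rw [Real.rpow_neg hσ.det_pos.le, Real.rpow_natCast, ← inv_pow]
  rw [hprodd, hdetA, hrpow]
  have hmul : (t / (2 * (2 * p + 3))) ^ (n * (n + 1) / 2)
      = c ^ (n * (n + 1) / 2) * t ^ (n * (n + 1) / 2) := by
    rw [← mul_pow, hc_def]
    congr 1
    field_simp
  rw [hmul]
  linear_combination (c ^ (n * (n + 1) / 2) * t ^ (n * (n + 1) / 2) * (1 - (n : ℝ) / t)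
      * ((((σ : Mat n).det)⁻¹) ^ (n + 1))) * hdetconj

end
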